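/- Under the full diversification parametrization (as in the indicator-function result), for any ε ∈ (0,1), if a ≥ C·(Np)⁻¹·log(p/ε) for an appropriate constant C, then for every pair (x,y) ∈ Z_p², the ℓ1-distance between softmax(f(x,y)) and the one-hot vector at (x+y) mod p is at most ε. -/

import Mathlib

open Real Finset

/-- The logit function implemented by the fully diversified network:
`f(x,y)[j] = (aN/2)(-1 + (p/2)𝟙[(x+y) mod p = j] + (p/4)(𝟙[2x mod p = j] + 𝟙[2y mod p = j]))`. -/
noncomputable def fNet (p N : ℕ) (a : ℝ) (x y j : ℕ) : ℝ :=
  a * (N : ℝ) / 2 *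
    (-1 + (p : ℝ) / 2 * (if (x + y) % p = j then 1 else 0)
      + (p : ℝ) / 4 * ((if (2 * x) % p = j then 1 else 0)
        + (if (2 * y) % p = j then 1 else 0)))

set_option maxHeartbeats 1000000 in
/-- For the fully diversified parametrization, taking `a ≥ C (Np)⁻¹ log(p/ε)` for an
appropriate constant `C > 0` ensures that for every input pair `(x,y) ∈ Z_p²`, the
ℓ1-distance between the softmax of the logits and the one-hot vector at `(x+y) mod p`
is at most `ε`. -/
theorem softmax_close_to_onehot (p N : ℕ) (hp : p.Prime) (hodd : Odd p) (hN : 0 < N) :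
    ∃ C : ℝ, 0 < C ∧ ∀ ε : ℝ, 0 < ε → ε < 1 → ∀ a : ℝ,
      a ≥ C * ((N : ℝ) * (p : ℝ))⁻¹ * Real.log ((p : ℝ) / ε) →
      ∀ x y : ℕ, x < p → y < p →
        ∑ j ∈ Finset.range p,
          |Real.exp (fNet p N a x y j) / (∑ i ∈ Finset.range p, Real.exp (fNet p N a x y i))
            - (if j = (x + y) % p then 1 else 0)| ≤ ε := by
  refine ⟨16, by norm_num, ?_⟩
  intro ε hε0 hε1 a ha x y hx hy
  have hp2 : 2 ≤ p := hp.two_le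
  have hpne2 : p ≠ 2 := by
    rintro rfl
    exact (Nat.not_odd_iff_even.mpr even_two) hodd
  have hp3 : 3 ≤ p := by omega
  have hpR : (3:ℝ) ≤ (p:ℝ) := by exact_mod_cast hp3
  have hpR0 : (0:ℝ) < (p:ℝ) := by linarith
  have hNR : (1:ℝ) ≤ (N:ℝ) := by exact_mod_cast hN
  have hlog : 0 < Real.log ((p:ℝ)/ε) := by
    apply Real.log_pos
    rw [lt_div_iff₀ hε0]
    nlinarith
  have hNp : (0:ℝ) < (N:ℝ) * (p:ℝ) := by positivity
  have ha0 : 0 < a := lt_of_lt_of_le (by positivity) ha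
  set j0 := (x + y) % p with hj0def
  have hj0 : j0 < p := Nat.mod_lt _ (by omega)
  set τ := a * (N:ℝ) * (p:ℝ) / 8 with hτ
  have h3 : 16 * Real.log ((p:ℝ)/ε) ≤ a * ((N:ℝ) * (p:ℝ)) := by
    have h := mul_le_mul_of_nonneg_right ha hNp.le
    calc 16 * Real.log ((p:ℝ)/ε)
        = 16 * ((N:ℝ)*(p:ℝ))⁻¹ * Real.log ((p:ℝ)/ε) * ((N:ℝ)*(p:ℝ)) := by
          field_simp
      _ ≤ a * ((N:ℝ)*(p:ℝ)) := h
  have hτlog : 2 * Real.log ((p:ℝ)/ε) ≤ τ := by rw [hτ]; nlinarith [h3]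
  have hτ0 : 0 < τ := by nlinarith
  -- key gap lemma
  have hj0eq : (x + y) % p = j0 := rfl
  have key : ∀ j ∈ Finset.range p, j ≠ j0 →
      fNet p N a x y j + τ ≤ fNet p N a x y j0 := by
    intro j hj hne
    have hne' : (x + y) % p ≠ j := fun h => hne (h.symm.trans hj0eq)
    unfold fNet
    rw [if_pos hj0eq, if_neg hne']
    have haN : (0:ℝ) ≤ a * (N:ℝ) := by positivity
    by_cases hxy : x = y
    · subst hxy
      have h2x : (2 * x) % p = j0 := by rw [two_mul]
      
      have hj' : (2 * x) % p ≠ j := fun h => hne (h.symm.trans h2x)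
      rw [if_pos h2x, if_neg hj']
      nlinarith [mul_nonneg haN hpR0.le]
    · have hxyne : x ≠ y := hxy
      have hcop : Nat.gcd p 2 = 1 := (Nat.coprime_two_left.mpr hodd).symm
      have hmodeq : ∀ u v : ℕ, u < p → v < p → u ≡ v [MOD p] → u = v := by
        intro u v hu hv h
        rwa [Nat.ModEq, Nat.mod_eq_of_lt hu, Nat.mod_eq_of_lt hv] at h
      have h2x : (2 * x) % p ≠ j0 := by
        intro h
        apply hxyne
        have hmod : 2 * x ≡ x + y [MOD p] := h.trans hj0eq.symm
        have h' : x + x ≡ x + y [MOD p] := by rwa [two_mul] at hmod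
        exact hmodeq x y hx hy (Nat.ModEq.add_left_cancel' x h')
      have h2y : (2 * y) % p ≠ j0 := by
        intro h
        apply hxyne
        have hmod : 2 * y ≡ x + y [MOD p] := h.trans hj0eq.symm
        have h' : y + y ≡ y + x [MOD p] := by
          rw [← two_mul]; rwa [Nat.add_comm x y] at hmod
        exact (hmodeq y x hy hx (Nat.ModEq.add_left_cancel' y h')).symm
      have hnb : ¬((2 * x) % p = j ∧ (2 * y) % p = j) := by
        rintro ⟨h1, h2⟩
        apply hxyne
        have hmod : 2 * x ≡ 2 * y [MOD p] := h1.trans h2.symm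
        exact hmodeq x y hx hy (Nat.ModEq.cancel_left_of_coprime hcop hmod)
      rw [if_neg h2x, if_neg h2y]
      have hs : ((if (2*x) % p = j then (1:ℝ) else 0)
          + (if (2*y) % p = j then (1:ℝ) else 0)) ≤ 1 := by
        by_cases h1 : (2*x) % p = j
        · by_cases h2 : (2*y) % p = j
          · exact absurd ⟨h1, h2⟩ hnb
          · simp [h1, h2]
        · by_cases h2 : (2*y) % p = j <;> simp [h1, h2]
      have hs0 : (0:ℝ) ≤ ((if (2*x) % p = j then (1:ℝ) else 0)
          + (if (2*y) % p = j then (1:ℝ) else 0)) := by positivity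
      nlinarith [mul_nonneg (mul_nonneg haN hpR0.le)
        (sub_nonneg.mpr hs), mul_nonneg haN hpR0.le]
  -- softmax part
  have hmem : j0 ∈ Finset.range p := Finset.mem_range.mpr hj0
  set S := ∑ i ∈ Finset.range p, Real.exp (fNet p N a x y i) with hSdef
  have hS0 : 0 < S := Finset.sum_pos (fun i _ => Real.exp_pos _)
    ⟨j0, hmem⟩
  set T := ∑ j ∈ (Finset.range p).erase j0, Real.exp (fNet p N a x y j) with hTdef
  have hT0 : 0 ≤ T := Finset.sum_nonneg fun j _ => (Real.exp_pos _).le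
  have hST : Real.exp (fNet p N a x y j0) + T = S := by
    rw [hTdef, hSdef]
    exact Finset.add_sum_erase (Finset.range p)
      (fun i => Real.exp (fNet p N a x y i)) hmem
  have hsplit :
      ∑ j ∈ Finset.range p,
        |Real.exp (fNet p N a x y j) / S - (if j = (x + y) % p then 1 else 0)|
      = |Real.exp (fNet p N a x y j0) / S - 1|
        + ∑ j ∈ (Finset.range p).erase j0,
          |Real.exp (fNet p N a x y j) / S - (if j = (x + y) % p then 1 else 0)| := by
    have h := Finset.add_sum_erase (Finset.range p)
      (fun j => |Real.exp (fNet p N a x y j) / S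
        - (if j = (x + y) % p then 1 else 0)|) hmem
    rw [if_pos hj0eq.symm] at h
    exact h.symm
  have herase : ∀ j ∈ (Finset.range p).erase j0,
      |Real.exp (fNet p N a x y j) / S - (if j = (x + y) % p then 1 else 0)|
      = Real.exp (fNet p N a x y j) / S := by
    intro j hj
    have hne : j ≠ j0 := Finset.ne_of_mem_erase hj
    rw [if_neg (by rw [hj0eq]; exact hne), sub_zero,
      abs_of_nonneg (div_nonneg (Real.exp_pos _).le hS0.le)]
  have hj0abs : |Real.exp (fNet p N a x y j0) / S - 1| = T / S := by
    have h1 : Real.exp (fNet p N a x y j0) / S - 1 = -(T / S) := by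
      have he : Real.exp (fNet p N a x y j0) = S - T := by linarith
      rw [he, sub_div, div_self hS0.ne']
      ring
    rw [h1, abs_neg, abs_of_nonneg (div_nonneg hT0 hS0.le)]
  have htotal :
      ∑ j ∈ Finset.range p,
        |Real.exp (fNet p N a x y j) / S - (if j = (x + y) % p then 1 else 0)|
      = 2 * (T / S) := by
    rw [hsplit, hj0abs, Finset.sum_congr rfl herase, ← Finset.sum_div, ← hTdef]
    ring
  rw [htotal]
  -- bound T
  have hcard : ((Finset.range p).erase j0).card = p - 1 := by
    rw [Finset.card_erase_of_mem hmem, Finset.card_range]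
  have hTle : T ≤ ((p:ℝ) - 1) * Real.exp (fNet p N a x y j0 - τ) := by
    calc T ≤ ∑ _j ∈ (Finset.range p).erase j0,
          Real.exp (fNet p N a x y j0 - τ) := by
          apply Finset.sum_le_sum
          intro j hj
          apply Real.exp_le_exp.mpr
          have := key j (Finset.mem_of_mem_erase hj) (Finset.ne_of_mem_erase hj)
          linarith
      _ = ((p:ℝ) - 1) * Real.exp (fNet p N a x y j0 - τ) := by
          rw [Finset.sum_const, hcard, nsmul_eq_mul, Nat.cast_sub (by omega),
            Nat.cast_one]
  have hSge : Real.exp (fNet p N a x y j0) ≤ S := by linarith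
  have hTS : T / S ≤ ((p:ℝ) - 1) * Real.exp (-τ) := by
    have h1 : T / S ≤ T / Real.exp (fNet p N a x y j0) :=
      div_le_div_of_nonneg_left hT0 (Real.exp_pos _) hSge
    have h2 : T / Real.exp (fNet p N a x y j0) ≤ ((p:ℝ) - 1) * Real.exp (-τ) := by
      rw [div_le_iff₀ (Real.exp_pos _)]
      calc T ≤ ((p:ℝ) - 1) * Real.exp (fNet p N a x y j0 - τ) := hTle
        _ = ((p:ℝ) - 1) * Real.exp (-τ) * Real.exp (fNet p N a x y j0) := by
            rw [show fNet p N a x y j0 - τ = -τ + fNet p N a x y j0 by ring,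
              Real.exp_add]
            ring
    exact h1.trans h2
  have hexp : Real.exp (-τ) ≤ (ε / (p:ℝ))^2 := by
    have hle : Real.exp (-τ) ≤ Real.exp (-(2 * Real.log ((p:ℝ)/ε))) :=
      Real.exp_le_exp.mpr (by linarith)
    have hr : (0:ℝ) < ε / (p:ℝ) := by positivity
    have heq : Real.exp (-(2 * Real.log ((p:ℝ)/ε))) = (ε / (p:ℝ))^2 := by
      have hlg : Real.log (ε / (p:ℝ)) = -Real.log ((p:ℝ)/ε) := by
        rw [show ε / (p:ℝ) = ((p:ℝ)/ε)⁻¹ by rw [inv_div], Real.log_inv]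
      rw [show -(2 * Real.log ((p:ℝ)/ε))
          = Real.log (ε / (p:ℝ)) + Real.log (ε / (p:ℝ)) by rw [hlg]; ring,
        Real.exp_add, Real.exp_log hr, sq]
    linarith [heq ▸ hle]
  have hfinal : 2 * (((p:ℝ) - 1) * (ε / (p:ℝ))^2) ≤ ε := by
    rw [div_pow]
    rw [show 2 * (((p:ℝ) - 1) * (ε^2 / (p:ℝ)^2))
        = (2 * ((p:ℝ) - 1) * ε^2) / (p:ℝ)^2 by ring,
      div_le_iff₀ (by positivity)]
    nlinarith [mul_pos hε0 (show (0:ℝ) < (p:ℝ)^2 - 2*((p:ℝ)-1) by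
        nlinarith [sq_nonneg ((p:ℝ) - 1)]),
      mul_nonneg (mul_nonneg hε0.le (show (0:ℝ) ≤ 1 - ε by linarith))
        (show (0:ℝ) ≤ 2*((p:ℝ)-1) by linarith)]
  have hexp0 : (0:ℝ) ≤ Real.exp (-τ) := (Real.exp_pos _).le
  have hpm1 : (0:ℝ) ≤ (p:ℝ) - 1 := by linarith
  calc 2 * (T / S) ≤ 2 * (((p:ℝ) - 1) * Real.exp (-τ)) := by linarith
    _ ≤ 2 * (((p:ℝ) - 1) * (ε / (p:ℝ))^2) := by nlinarith
    _ ≤ ε := hfinal
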